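/- Suppose a group G admits a faithful self-similar action on X^*, transitive on the first level, over a finite alphabet X with |X| = d. Then G admits a simple virtual endomorphism of index d; specifically, for a fixed letter x₀ ∈ X, the stabilizer G₀ of the one-letter word (x₀) has index d in G, and the map G₀ → G sending g to the unique h ∈ G with g • (x₀·w) = x₀·(h • w) for all w ∈ X^* is a simple virtual endomorphism. -/

import Mathlib

/-- An action of `G` on the rooted tree `X*` (encoded as a homomorphism into the
permutations of the set of words `List X`) is self-similar. -/
def IsSelfSimilarAction {G : Type*} [Group G] {X : Type*}
    (ρ : G →* Equiv.Perm (List X)) : Prop :=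
  (∀ g : G, ρ g [] = []) ∧
    ∀ (g : G) (x : X), ∃ (h : G) (y : X), ∀ w : List X, ρ g (x :: w) = y :: ρ h w

/-- The action is transitive on the first level of the tree. -/
def IsFirstLevelTransitive {G : Type*} [Group G] {X : Type*}
    (ρ : G →* Equiv.Perm (List X)) : Prop :=
  ∀ x y : X, ∃ g : G, ρ g [x] = [y]

/-- A virtual endomorphism `φ : G₀ → G` is simple if the only normal subgroup `N`
of `G` with `N ≤ G₀` and `φ(N) ⊆ N` is trivial. -/
def IsSimpleVirtualEndo {G : Type*} [Group G] (G₀ : Subgroup G) (φ : G₀ →* G) : Prop :=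
  ∀ N : Subgroup G, N.Normal → N ≤ G₀ →
    (∀ (g : G) (hg : g ∈ G₀), g ∈ N → φ ⟨g, hg⟩ ∈ N) → N = ⊥

/-- If `G` has a faithful self-similar action, transitive on the first level, on `X*`
with `|X| = d`, then for a fixed letter `x₀` the stabilizer `G₀` of the one-letter
word `[x₀]` has index `d`, and the map `G₀ → G` sending `g` to the unique `h` with
`g • (x₀·w) = x₀·(h • w)` for all `w` is a simple virtual endomorphism of index `d`. -/
theorem simple_virtual_endo_of_selfSimilar {G : Type*} [Group G] {X : Type} [Fintype X]
    (d : ℕ) (ρ : G →* Equiv.Perm (List X)) (hfaith : Function.Injective ρ)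
    (hss : IsSelfSimilarAction ρ) (htr : IsFirstLevelTransitive ρ)
    (hcard : Nat.card X = d) (x₀ : X) :
    (Subgroup.comap ρ (MulAction.stabilizer (Equiv.Perm (List X)) ([x₀] : List X))).index = d ∧
      ∃ φ : ↥(Subgroup.comap ρ (MulAction.stabilizer (Equiv.Perm (List X)) ([x₀] : List X))) →* G,
        (∀ g : ↥(Subgroup.comap ρ (MulAction.stabilizer (Equiv.Perm (List X)) ([x₀] : List X))),
          ∀ w : List X, ρ (g : G) (x₀ :: w) = x₀ :: ρ (φ g) w) ∧
        IsSimpleVirtualEndo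
          (Subgroup.comap ρ (MulAction.stabilizer (Equiv.Perm (List X)) ([x₀] : List X))) φ := by
  classical
  set H := Subgroup.comap ρ (MulAction.stabilizer (Equiv.Perm (List X)) ([x₀] : List X))
    with hHdef
  have memH : ∀ g : G, g ∈ H ↔ ρ g [x₀] = [x₀] := by
    intro g
    simp [hHdef, Subgroup.mem_comap, MulAction.mem_stabilizer_iff, Equiv.Perm.smul_def]
  -- the action preserves the length of words
  have hlen : ∀ (w : List X) (g : G), (ρ g w).length = w.length := by
    intro w
    induction w with
    | nil => intro g; rw [hss.1 g]
    | cons x w ih =>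
      intro g
      obtain ⟨h, y, hy⟩ := hss.2 g x
      rw [hy, List.length_cons, List.length_cons, ih h]
  -- uniqueness from faithfulness
  have huniq : ∀ h h' : G, (∀ w : List X, ρ h w = ρ h' w) → h = h' := by
    intro h h' hw
    exact hfaith (Equiv.ext hw)
  -- the section over the first letter
  have hsec : ∀ g : G, g ∈ H → ∃ h : G, ∀ w : List X, ρ g (x₀ :: w) = x₀ :: ρ h w := by
    intro g hg
    obtain ⟨h, y, hy⟩ := hss.2 g x₀
    have h2 : ([x₀] : List X) = y :: ρ h [] := ((memH g).1 hg).symm.trans (hy [])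
    rw [hss.1 h] at h2
    obtain ⟨rfl, -⟩ := List.cons.injEq .. ▸ h2
    exact ⟨h, hy⟩
  -- Part 1: the index is d
  have hindex : H.index = d := by
    have hσ : ∀ g : G, ∃ y : X, ρ g [x₀] = [y] := by
      intro g
      exact List.length_eq_one_iff.mp (by simpa using hlen [x₀] g)
    set σ : G → X := fun g => (hσ g).choose with hσdef
    have hσspec : ∀ g : G, ρ g [x₀] = [σ g] := fun g => (hσ g).choose_spec
    have hwd : ∀ g₁ g₂ : G, g₁⁻¹ * g₂ ∈ H → σ g₁ = σ g₂ := by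
      intro g₁ g₂ hmem
      have hx : ρ (g₁⁻¹ * g₂) [x₀] = [x₀] := (memH _).1 hmem
      have : ρ g₂ [x₀] = ρ g₁ [x₀] := by
        calc ρ g₂ [x₀] = ρ (g₁ * (g₁⁻¹ * g₂)) [x₀] := by
              rw [show g₁ * (g₁⁻¹ * g₂) = g₂ by group]
          _ = ρ g₁ (ρ (g₁⁻¹ * g₂) [x₀]) := by rw [map_mul]; rfl
          _ = ρ g₁ [x₀] := by rw [hx]
      have h2 : ([σ g₂] : List X) = [σ g₁] := by rw [← hσspec, ← hσspec, this]
      simpa using h2.symm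
    let f : G ⧸ H → X := Quotient.lift σ
      (fun a b hab => hwd a b (QuotientGroup.leftRel_apply.mp hab))
    have hinj : Function.Injective f := by
      intro a b
      induction a using Quotient.ind
      induction b using Quotient.ind
      rename_i g₁ g₂
      intro hfe
      have hfe' : σ g₁ = σ g₂ := hfe
      have hmem : g₁⁻¹ * g₂ ∈ H := by
        rw [memH, map_mul, map_inv]
        simp only [Equiv.Perm.mul_apply]
        rw [hσspec g₂, ← hfe', ← hσspec g₁]
        simp
      exact Quotient.sound (QuotientGroup.leftRel_apply.mpr hmem)
    have hsurj : Function.Surjective f := by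
      intro y
      obtain ⟨g, hg⟩ := htr x₀ y
      refine ⟨Quotient.mk _ g, ?_⟩
      have : ([σ g] : List X) = [y] := by rw [← hσspec, hg]
      exact (by simpa using this : σ g = y)
    have : Nat.card (G ⧸ H) = Nat.card X := Nat.card_congr (Equiv.ofBijective f ⟨hinj, hsurj⟩)
    rw [Subgroup.index, this, hcard]
  refine ⟨hindex, ?_⟩
  -- construct φ
  set φfun : H → G := fun g => (hsec g g.2).choose with hφdef
  have φspec : ∀ g : H, ∀ w : List X, ρ (g : G) (x₀ :: w) = x₀ :: ρ (φfun g) w :=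
    fun g => (hsec g g.2).choose_spec
  have φone : φfun 1 = 1 := by
    apply huniq
    intro w
    have := φspec 1 w
    simp only [OneMemClass.coe_one, map_one, Equiv.Perm.coe_one, id_eq] at this ⊢
    exact (List.cons.injEq .. ▸ this).2.symm
  have φmul : ∀ g₁ g₂ : H, φfun (g₁ * g₂) = φfun g₁ * φfun g₂ := by
    intro g₁ g₂
    apply huniq
    intro w
    have h1 : ρ ((g₁ * g₂ : H) : G) (x₀ :: w) = x₀ :: ρ (φfun (g₁ * g₂)) w := φspec _ w
    have h2 : ρ ((g₁ * g₂ : H) : G) (x₀ :: w)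
        = x₀ :: ρ (φfun g₁) (ρ (φfun g₂) w) := by
      push_cast
      rw [map_mul]
      simp only [Equiv.Perm.mul_apply]
      rw [φspec g₂ w, φspec g₁ (ρ (φfun g₂) w)]
    have := h1.symm.trans h2
    have := (List.cons.injEq .. ▸ this).2
    rw [this, map_mul]
    rfl
  refine ⟨⟨⟨φfun, φone⟩, φmul⟩, φspec, ?_⟩
  -- simplicity
  intro N hN hNle hNinv
  have key : ∀ (k : ℕ) (w : List X), w.length = k → ∀ n ∈ N, ρ n w = w := by
    intro k
    induction k with
    | zero =>
      intro w hw n hn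
      rw [List.length_eq_zero_iff.mp hw]
      exact hss.1 n
    | succ k ih =>
      intro w hw n hn
      obtain ⟨x, w', rfl⟩ : ∃ x w', w = x :: w' := by
        cases w with
        | nil => simp at hw
        | cons a l => exact ⟨a, l, rfl⟩
      obtain ⟨g, hg⟩ := htr x₀ x
      obtain ⟨h, y, hy⟩ := hss.2 g x₀
      have hyx : y = x := by
        have h2 : ([x] : List X) = y :: ρ h [] := hg.symm.trans (hy [])
        rw [hss.1 h] at h2
        exact ((List.cons.injEq .. ▸ h2).1).symm
      subst hyx
      -- conjugate n by g
      have hmN : g⁻¹ * n * g ∈ N := by simpa using hN.conj_mem n hn g⁻¹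
      have hmH : g⁻¹ * n * g ∈ H := hNle hmN
      set m : H := ⟨g⁻¹ * n * g, hmH⟩ with hmdef
      have hφmN : φfun m ∈ N := hNinv _ hmH hmN
      -- the tail
      set v : List X := (ρ h).symm w' with hvdef
      have hhv : ρ h v = w' := Equiv.apply_symm_apply _ _
      have hvlen : v.length = k := by
        have := hlen v h
        rw [hhv] at this
        have hw' : w'.length = k := by simpa using hw
        omega
      have hφv : ρ (φfun m) v = v := ih v hvlen _ hφmN
      calc ρ n (y :: w') = ρ n (ρ g (x₀ :: v)) := by rw [hy v, hhv]
        _ = ρ (n * g) (x₀ :: v) := by rw [map_mul]; rfl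
        _ = ρ (g * (g⁻¹ * n * g)) (x₀ :: v) := by group
        _ = ρ g (ρ (g⁻¹ * n * g) (x₀ :: v)) := by rw [map_mul]; rfl
        _ = ρ g (x₀ :: ρ (φfun m) v) := by rw [φspec m v]
        _ = ρ g (x₀ :: v) := by rw [hφv]
        _ = y :: w' := by rw [hy v, hhv]
  rw [Subgroup.eq_bot_iff_forall]
  intro n hn
  apply hfaith
  apply Equiv.ext
  intro w
  rw [map_one]
  simpa using key w.length w rfl n hn
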